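/- A Parikh vector q = (x, y) with x + y ≤ |w| occurs as the Parikh vector of a factor of the binary word w if and only if f₁(w, x + y) ≤ y ≤ F₁(w, x + y), where y counts the 1s. -/

import Mathlib

/-- Maximum number of 1s in a factor of `w` of length `k`. -/
def F1 (w : List Bool) (k : ℕ) : ℕ :=
  (Finset.range (w.length - k + 1)).sup fun i => ((w.drop i).take k).count true

/-- Minimum number of 1s in a factor of `w` of length `k`. -/
noncomputable def f1 (w : List Bool) (k : ℕ) : ℕ :=
  sInf {m : ℕ | ∃ v : List Bool, v <:+: w ∧ v.length = k ∧ v.count true = m}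

lemma count_tf (v : List Bool) : v.count true + v.count false = v.length := by
  induction v with
  | nil => simp
  | cons a l ih => cases a <;> simp [List.count_cons] <;> omega

lemma window_infix (w : List Bool) (i k : ℕ) : ((w.drop i).take k) <:+: w :=
  ((w.drop i).take_prefix k).isInfix.trans (w.drop_suffix i).isInfix

lemma infix_window {v w : List Bool} (h : v <:+: w) :
    ∃ i, i + v.length ≤ w.length ∧ (w.drop i).take v.length = v := by
  obtain ⟨s, t, rfl⟩ := h
  refine ⟨s.length, by simp, ?_⟩
  rw [List.append_assoc, List.drop_left, List.take_left]

lemma take_count_step (w : List Bool) (j : ℕ) :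
    (w.take (j+1)).count true ≤ (w.take j).count true + 1 ∧
      (w.take j).count true ≤ (w.take (j+1)).count true := by
  rw [List.take_add, List.count_append]
  have h2 : ((w.drop j).take 1).count true ≤ 1 :=
    le_trans (List.count_le_length) (by simp [List.length_take])
  omega

lemma c_step (w : List Bool) (k i : ℕ) :
    ((w.drop (i+1)).take k).count true ≤ ((w.drop i).take k).count true + 1 ∧
      ((w.drop i).take k).count true ≤ ((w.drop (i+1)).take k).count true + 1 := by
  have key : ∀ j, (w.take (j+k)).count true
      = (w.take j).count true + ((w.drop j).take k).count true := fun j => by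
    rw [List.take_add, List.count_append]
  have k1 := key i
  have k2 := key (i+1)
  rw [show i+1+k = (i+k)+1 by ring] at k2
  have s1 := take_count_step w i
  have s2 := take_count_step w (i+k)
  omega

lemma ivt_up (c : ℕ → ℕ) (hstep : ∀ i, c (i+1) ≤ c i + 1) :
    ∀ j i y, i ≤ j → c i ≤ y → y ≤ c j → ∃ m, i ≤ m ∧ m ≤ j ∧ c m = y := by
  intro j
  induction j with
  | zero =>
    intro i y hij h1 h2
    have hi0 : i = 0 := Nat.le_zero.mp hij
    subst hi0
    exact ⟨0, le_refl _, le_refl _, by omega⟩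
  | succ j ih =>
    intro i y hij h1 h2
    rcases eq_or_lt_of_le hij with heq | hlt
    · rw [heq] at h1
      exact ⟨j+1, by omega, le_refl _, by omega⟩
    · by_cases hy : y ≤ c j
      · obtain ⟨m, hm1, hm2, hm3⟩ := ih i y (by omega) h1 hy
        exact ⟨m, hm1, by omega, hm3⟩
      · exact ⟨j+1, by omega, le_refl _, by have := hstep j; omega⟩

lemma ivt_down (c : ℕ → ℕ) (hstep : ∀ i, c i ≤ c (i+1) + 1) :
    ∀ j i y, i ≤ j → y ≤ c i → c j ≤ y → ∃ m, i ≤ m ∧ m ≤ j ∧ c m = y := by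
  intro j
  induction j with
  | zero =>
    intro i y hij h1 h2
    have hi0 : i = 0 := Nat.le_zero.mp hij
    subst hi0
    exact ⟨0, le_refl _, le_refl _, by omega⟩
  | succ j ih =>
    intro i y hij h1 h2
    rcases eq_or_lt_of_le hij with heq | hlt
    · rw [heq] at h1
      exact ⟨j+1, by omega, le_refl _, by omega⟩
    · by_cases hy : c j ≤ y
      · obtain ⟨m, hm1, hm2, hm3⟩ := ih i y (by omega) h1 hy
        exact ⟨m, hm1, by omega, hm3⟩
      · exact ⟨j+1, by omega, le_refl _, by have := hstep j; omega⟩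

theorem stmt_7 (w : List Bool) (x y : ℕ) (h : x + y ≤ w.length) :
    (∃ v : List Bool, v <:+: w ∧ v.count false = x ∧ v.count true = y) ↔
      (f1 w (x + y) ≤ y ∧ y ≤ F1 w (x + y)) := by
  constructor
  · rintro ⟨v, hvw, hx, hy⟩
    have hlen : v.length = x + y := by have := count_tf v; omega
    obtain ⟨i, hik, hvi⟩ := infix_window hvw
    rw [hlen] at hik hvi
    constructor
    · exact Nat.sInf_le ⟨v, hvw, hlen, hy⟩
    · have hi : i ∈ Finset.range (w.length - (x+y) + 1) := Finset.mem_range.mpr (by omega)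
      have hyy : ((w.drop i).take (x+y)).count true = y := by rw [hvi, hy]
      calc y = ((w.drop i).take (x+y)).count true := hyy.symm
        _ ≤ F1 w (x+y) :=
          Finset.le_sup (f := fun i => ((w.drop i).take (x+y)).count true) hi
  · rintro ⟨h1, h2⟩
    have hne : {m : ℕ | ∃ v : List Bool, v <:+: w ∧ v.length = x + y ∧ v.count true = m}.Nonempty := by
      refine ⟨((w.drop 0).take (x+y)).count true, (w.drop 0).take (x+y),
        window_infix w 0 (x+y), ?_, rfl⟩
      simp only [List.drop_zero, List.length_take]
      omega
    obtain ⟨v0, hv0w, hv0len, hv0c⟩ := Nat.sInf_mem hne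
    obtain ⟨i0, hi0, hw0⟩ := infix_window hv0w
    rw [hv0len] at hi0 hw0
    have hrne : (Finset.range (w.length - (x+y) + 1)).Nonempty := ⟨0, by simp⟩
    obtain ⟨i1, hi1, hF⟩ := Finset.exists_mem_eq_sup _ hrne
      (fun i => ((w.drop i).take (x+y)).count true)
    rw [Finset.mem_range] at hi1
    have hci0 : ((w.drop i0).take (x+y)).count true = f1 w (x+y) := by
      rw [hw0]; exact hv0c
    have hci1 : F1 w (x+y) = ((w.drop i1).take (x+y)).count true := hF
    have key : ∃ m, m + (x+y) ≤ w.length ∧ ((w.drop m).take (x+y)).count true = y := by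
      rcases le_total i0 i1 with hcc | hcc
      · obtain ⟨m, hm1, hm2, hm3⟩ := ivt_up (fun i => ((w.drop i).take (x+y)).count true)
          (fun i => (c_step w (x+y) i).1) i1 i0 y hcc (by omega)
          (by omega)
        exact ⟨m, by omega, hm3⟩
      · obtain ⟨m, hm1, hm2, hm3⟩ := ivt_down (fun i => ((w.drop i).take (x+y)).count true)
          (fun i => (c_step w (x+y) i).2) i0 i1 y hcc (by omega)
          (by omega)
        exact ⟨m, by omega, hm3⟩
    obtain ⟨m, hm, hcm⟩ := key
    refine ⟨(w.drop m).take (x+y), window_infix w m (x+y), ?_, hcm⟩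
    have hl : ((w.drop m).take (x+y)).length = x + y := by
      simp only [List.length_take, List.length_drop]
      omega
    have := count_tf ((w.drop m).take (x+y))
    omega
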